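/- arXiv:1404.5455 — 7 statements merged into one kernel-verified Lean document; each statement's English description precedes it below -/
import Mathlib

section
/- For the k×(k+1) rectangle with generators σ_L, σ_R as above, the commutator [σ_L, σ_R⁻¹] = σ_L σ_R⁻¹ σ_L⁻¹ σ_R satisfies [σ_L, σ_R⁻¹](i,j) = (i, j-2) whenever i > 1 and j > 2. -/
/-- For the k×(k+1) rectangle with generators σ_L (clockwise rotation of the left k×k block,
fixing column k+1) and σ_R (clockwise rotation of the right k×k block, fixing column 1),
the commutator [σ_L, σ_R⁻¹] = σ_L σ_R⁻¹ σ_L⁻¹ σ_R satisfies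
[σ_L, σ_R⁻¹](i,j) = (i, j-2) whenever i > 1 and j > 2. -/
theorem commutator_L_Rinv_shifts_left (k : ℕ) (σL σR : Equiv.Perm (ℕ × ℕ))
    (hL : ∀ i j, 1 ≤ i → i ≤ k → 1 ≤ j → j ≤ k → σL (i, j) = (j, k + 1 - i))
    (hL' : ∀ i, 1 ≤ i → i ≤ k → σL (i, k + 1) = (i, k + 1))
    (hR : ∀ i j, 1 ≤ i → i ≤ k → 2 ≤ j → j ≤ k + 1 → σR (i, j) = (j - 1, k + 2 - i))
    (hR' : ∀ i, 1 ≤ i → i ≤ k → σR (i, 1) = (i, 1)) :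
    ∀ i j, 1 < i → i ≤ k → 2 < j → j ≤ k + 1 →
      (σL * σR⁻¹ * σL⁻¹ * σR) (i, j) = (i, j - 2) := by
  intro i j h1 h2 h3 h4
  have hs1 : σR (i, j) = (j - 1, k + 2 - i) := hR i j (by omega) h2 (by omega) h4
  have hs2 : σL⁻¹ (j - 1, k + 2 - i) = (i - 1, j - 1) := by
    rw [Equiv.Perm.inv_eq_iff_eq,
      hL (i - 1) (j - 1) (by omega) (by omega) (by omega) (by omega)]
    simp only [Prod.mk.injEq, true_and]
    omega
  have hs3 : σR⁻¹ (i - 1, j - 1) = (k + 3 - j, i) := by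
    rw [Equiv.Perm.inv_eq_iff_eq,
      hR (k + 3 - j) i (by omega) (by omega) (by omega) (by omega)]
    simp only [Prod.mk.injEq, true_and]
    omega
  have hs4 : σL (k + 3 - j, i) = (i, j - 2) := by
    rw [hL (k + 3 - j) i (by omega) (by omega) (by omega) (by omega)]
    simp only [Prod.mk.injEq, true_and]
    omega
  simp [Equiv.Perm.mul_apply, hs1, hs2, hs3, hs4]
end

section
/- For the k×(k+1) rectangle with generators σ_L, σ_R as above, the commutator [σ_L, σ_R] = σ_L σ_R σ_L⁻¹ σ_R⁻¹ satisfies [σ_L, σ_R](i,j) = (i+2, j) whenever i < k-1 and 1 < j < k+1. -/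
/-- For the k×(k+1) rectangle with generators σ_L and σ_R as in the paper,
the commutator [σ_L, σ_R] = σ_L σ_R σ_L⁻¹ σ_R⁻¹ satisfies
[σ_L, σ_R](i,j) = (i+2, j) whenever i < k-1 and 1 < j < k+1. -/
theorem commutator_L_R_shifts_down (k : ℕ) (σL σR : Equiv.Perm (ℕ × ℕ))
    (hL : ∀ i j, 1 ≤ i → i ≤ k → 1 ≤ j → j ≤ k → σL (i, j) = (j, k + 1 - i))
    (hL' : ∀ i, 1 ≤ i → i ≤ k → σL (i, k + 1) = (i, k + 1))
    (hR : ∀ i j, 1 ≤ i → i ≤ k → 2 ≤ j → j ≤ k + 1 → σR (i, j) = (j - 1, k + 2 - i))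
    (hR' : ∀ i, 1 ≤ i → i ≤ k → σR (i, 1) = (i, 1)) :
    ∀ i j, 1 ≤ i → i + 1 < k → 1 < j → j < k + 1 →
      (σL * σR * σL⁻¹ * σR⁻¹) (i, j) = (i + 2, j) := by
  intro i j hi hik hj hjk
  have e1 : σR⁻¹ (i, j) = (k + 2 - j, i + 1) := by
    rw [Equiv.Perm.inv_eq_iff_eq,
      hR (k + 2 - j) (i + 1) (by omega) (by omega) (by omega) (by omega)]
    rw [Prod.mk.injEq]; omega
  have e2 : σL⁻¹ (k + 2 - j, i + 1) = (k - i, k + 2 - j) := by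
    rw [Equiv.Perm.inv_eq_iff_eq,
      hL (k - i) (k + 2 - j) (by omega) (by omega) (by omega) (by omega)]
    rw [Prod.mk.injEq]; omega
  have e3 : σR (k - i, k + 2 - j) = (k + 1 - j, i + 2) := by
    rw [hR (k - i) (k + 2 - j) (by omega) (by omega) (by omega) (by omega)]
    rw [Prod.mk.injEq]; omega
  have e4 : σL (k + 1 - j, i + 2) = (i + 2, j) := by
    rw [hL (k + 1 - j) (i + 2) (by omega) (by omega) (by omega) (by omega)]
    rw [Prod.mk.injEq]; omega
  simp [Equiv.Perm.mul_apply, e1, e2, e3, e4]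
end

section
/- For the k×(k+1) rectangle with generators σ_L, σ_R as above, σ_R² σ_L² (i,j) = (i, j+2) if j < k, and σ_R² σ_L² (i,j) = (k+1-i, j-(k-1)) if j ≥ k. -/
/-- For the k×(k+1) rectangle with generators σ_L and σ_R as in the paper,
σ_R² σ_L² (i,j) = (i, j+2) if j < k, and σ_R² σ_L² (i,j) = (k+1-i, j-(k-1)) if j ≥ k. -/
theorem sigmaR_sq_sigmaL_sq_action (k : ℕ) (σL σR : Equiv.Perm (ℕ × ℕ))
    (hL : ∀ i j, 1 ≤ i → i ≤ k → 1 ≤ j → j ≤ k → σL (i, j) = (j, k + 1 - i))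
    (hL' : ∀ i, 1 ≤ i → i ≤ k → σL (i, k + 1) = (i, k + 1))
    (hR : ∀ i j, 1 ≤ i → i ≤ k → 2 ≤ j → j ≤ k + 1 → σR (i, j) = (j - 1, k + 2 - i))
    (hR' : ∀ i, 1 ≤ i → i ≤ k → σR (i, 1) = (i, 1)) :
    ∀ i j, 1 ≤ i → i ≤ k → 1 ≤ j → j ≤ k + 1 →
      (j < k → (σR ^ 2 * σL ^ 2) (i, j) = (i, j + 2)) ∧
      (k ≤ j → (σR ^ 2 * σL ^ 2) (i, j) = (k + 1 - i, j - (k - 1))) := by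
  intro i j hi1 hik hj1 hjk1
  have hk1 : 1 ≤ k := le_trans hi1 hik
  have hpow : (σR ^ 2 * σL ^ 2) (i, j) = σR (σR (σL (σL (i, j)))) := by
    simp [sq, Equiv.Perm.mul_apply]
  constructor
  · intro hjk
    have e1 : σL (i, j) = (j, k + 1 - i) := hL i j hi1 hik hj1 (by omega)
    have e2 : σL (j, k + 1 - i) = (k + 1 - i, k + 1 - j) :=
      hL j (k + 1 - i) hj1 (by omega) (by omega) (by omega)
    have e3 : σR (k + 1 - i, k + 1 - j) = (k - j, i + 1) := by
      rw [hR (k + 1 - i) (k + 1 - j) (by omega) (by omega) (by omega) (by omega)]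
      congr 1 <;> omega
    have e4 : σR (k - j, i + 1) = (i, j + 2) := by
      rw [hR (k - j) (i + 1) (by omega) (by omega) (by omega) (by omega)]
      congr 1 <;> omega
    rw [hpow, e1, e2, e3, e4]
  · intro hkj
    rcases eq_or_lt_of_le hkj with hk | hk
    · -- j = k
      subst hk
      have e1 : σL (i, k) = (k, k + 1 - i) := hL i k hi1 hik hk1 le_rfl
      have e2 : σL (k, k + 1 - i) = (k + 1 - i, 1) := by
        rw [hL k (k + 1 - i) hk1 le_rfl (by omega) (by omega)]
        congr 1 <;> omega
      have e3 : σR (k + 1 - i, 1) = (k + 1 - i, 1) := hR' (k + 1 - i) (by omega) (by omega)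
      rw [hpow, e1, e2, e3, e3]
      congr 1 <;> omega
    · -- j = k + 1
      have hj : j = k + 1 := by omega
      subst hj
      have e1 : σL (i, k + 1) = (i, k + 1) := hL' i hi1 hik
      have e2 : σR (i, k + 1) = (k, k + 2 - i) := by
        rw [hR i (k + 1) hi1 hik (by omega) le_rfl]
        congr 1 <;> omega
      have e3 : σR (k, k + 2 - i) = (k + 1 - i, 2) := by
        rw [hR k (k + 2 - i) hk1 le_rfl (by omega) (by omega)]
        congr 1 <;> omega
      rw [hpow, e1, e1, e2, e3]
      congr 1 <;> omega
end

section
/- For the k×(k+1) rectangle with generators σ_L, σ_R as above, the permutation (σ_R⁻¹ σ_L⁻¹)² fixes every interior tile (i,j) with 2 ≤ i ≤ k and 2 ≤ j ≤ k, and cyclically rotates the remaining boundary tiles (the left column, top row, and right column) by k+1 positions. -/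
/-- Enumeration of the boundary cycle (left column bottom-to-top, then top row
left-to-right, then right column top-to-bottom) of the k×(k+1) rectangle:
`boundary k t` for `t < 3k-1` lists the left column, top row and right column tiles. -/
def boundary (k t : ℕ) : ℕ × ℕ :=
  if t < k then (k - t, 1)
  else if t < 2 * k then (1, t - k + 2)
  else (t - 2 * k + 2, k + 1)

/-- For the k×(k+1) rectangle with generators σ_L and σ_R as in the paper,
the permutation (σ_R⁻¹ σ_L⁻¹)² fixes every interior tile (i,j) with 2 ≤ i ≤ k and
2 ≤ j ≤ k, and cyclically rotates the remaining boundary tiles (the left column,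
top row, and right column, a cycle of length 3k-1) by k+1 positions. -/
theorem sigmaRinv_sigmaLinv_sq_action (k : ℕ) (σL σR : Equiv.Perm (ℕ × ℕ))
    (hL : ∀ i j, 1 ≤ i → i ≤ k → 1 ≤ j → j ≤ k → σL (i, j) = (j, k + 1 - i))
    (hL' : ∀ i, 1 ≤ i → i ≤ k → σL (i, k + 1) = (i, k + 1))
    (hR : ∀ i j, 1 ≤ i → i ≤ k → 2 ≤ j → j ≤ k + 1 → σR (i, j) = (j - 1, k + 2 - i))
    (hR' : ∀ i, 1 ≤ i → i ≤ k → σR (i, 1) = (i, 1)) :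
    (∀ i j, 2 ≤ i → i ≤ k → 2 ≤ j → j ≤ k →
      ((σR⁻¹ * σL⁻¹) ^ 2) ((i, j) : ℕ × ℕ) = (i, j)) ∧
    (∀ t, t < 3 * k - 1 →
      ((σR⁻¹ * σL⁻¹) ^ 2) (boundary k t) = boundary k ((t + (k + 1)) % (3 * k - 1))) := by
  -- inverse of σL on the square
  have invL : ∀ i j, 1 ≤ i → i ≤ k → 1 ≤ j → j ≤ k →
      σL⁻¹ ((i, j) : ℕ × ℕ) = (k + 1 - j, i) := by
    intro i j h1 h2 h3 h4
    have h : σL (k + 1 - j, i) = (i, j) := by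
      rw [hL (k + 1 - j) i (by omega) (by omega) h1 h2]
      congr 1
      omega
    rw [← h, Equiv.Perm.inv_def, Equiv.symm_apply_apply]
  have invLtop : ∀ i, 1 ≤ i → i ≤ k → σL⁻¹ ((i, k + 1) : ℕ × ℕ) = (i, k + 1) := by
    intro i h1 h2
    conv_lhs => rw [← hL' i h1 h2]
    rw [Equiv.Perm.inv_def, Equiv.symm_apply_apply]
  -- inverse of σR
  have invR : ∀ a b, 1 ≤ a → a ≤ k → 2 ≤ b → b ≤ k + 1 →
      σR⁻¹ ((a, b) : ℕ × ℕ) = (k + 2 - b, a + 1) := by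
    intro a b h1 h2 h3 h4
    have h : σR (k + 2 - b, a + 1) = (a, b) := by
      rw [hR (k + 2 - b) (a + 1) (by omega) (by omega) (by omega) (by omega)]
      congr 1 <;> omega
    rw [← h, Equiv.Perm.inv_def, Equiv.symm_apply_apply]
  have invR1 : ∀ a, 1 ≤ a → a ≤ k → σR⁻¹ ((a, 1) : ℕ × ℕ) = (a, 1) := by
    intro a h1 h2
    conv_lhs => rw [← hR' a h1 h2]
    rw [Equiv.Perm.inv_def, Equiv.symm_apply_apply]
  -- the map f = σR⁻¹ ∘ σL⁻¹ on the three kinds of tiles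
  have fL : ∀ i j, 2 ≤ i → i ≤ k → 1 ≤ j → j ≤ k →
      (σR⁻¹ * σL⁻¹) ((i, j) : ℕ × ℕ) = (k + 2 - i, k + 2 - j) := by
    intro i j h1 h2 h3 h4
    rw [Equiv.Perm.mul_apply, invL i j (by omega) h2 h3 h4,
      invR (k + 1 - j) i (by omega) (by omega) h1 (by omega)]
    congr 1 <;> omega
  have f1 : ∀ j, 1 ≤ j → j ≤ k →
      (σR⁻¹ * σL⁻¹) ((1, j) : ℕ × ℕ) = (k + 1 - j, 1) := by
    intro j h3 h4
    rw [Equiv.Perm.mul_apply, invL 1 j (by omega) (by omega) h3 h4,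
      invR1 (k + 1 - j) (by omega) (by omega)]
  have fT : ∀ i, 1 ≤ i → i ≤ k →
      (σR⁻¹ * σL⁻¹) ((i, k + 1) : ℕ × ℕ) = (1, i + 1) := by
    intro i h1 h2
    rw [Equiv.Perm.mul_apply, invLtop i h1 h2,
      invR i (k + 1) h1 h2 (by omega) (by omega)]
    congr 1
    omega
  -- f shifts the boundary cycle by 2k
  have step : ∀ t, t < 3 * k - 1 →
      (σR⁻¹ * σL⁻¹) (boundary k t) = boundary k ((t + 2 * k) % (3 * k - 1)) := by
    intro t ht
    have hk : 1 ≤ k := by omega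
    by_cases hA : t < k
    · by_cases hA1 : t = k - 1
      · -- tile (1,1) ↦ (k,1)
        have e1 : boundary k t = (1, 1) := by
          simp only [boundary, if_pos hA]
          congr 1
          omega
        have e2 : (t + 2 * k) % (3 * k - 1) = 0 := by
          have : t + 2 * k = 3 * k - 1 := by omega
          simp [this]
        rw [e1, e2, f1 1 le_rfl hk]
        simp only [boundary]
        rw [if_pos (by omega : 0 < k)]
        congr 1 <;> omega
      · -- tile (k-t,1) with k-t ≥ 2  ↦  (t+2, k+1)
        have e1 : boundary k t = (k - t, 1) := by simp only [boundary, if_pos hA]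
        have e2 : (t + 2 * k) % (3 * k - 1) = t + 2 * k :=
          Nat.mod_eq_of_lt (by omega)
        rw [e1, e2, fL (k - t) 1 (by omega) (by omega) le_rfl hk]
        simp only [boundary, if_neg (by omega : ¬ t + 2 * k < k),
          if_neg (by omega : ¬ t + 2 * k < 2 * k)]
        congr 1 <;> omega
    · by_cases hB : t < 2 * k
      · by_cases hB1 : t = 2 * k - 1
        · -- tile (1, k+1) ↦ (1, 2)
          have e1 : boundary k t = (1, k + 1) := by
            simp only [boundary, if_neg hA, if_pos hB]
            congr 1
            omega
          have e2 : (t + 2 * k) % (3 * k - 1) = k := by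
            have h : t + 2 * k = k + (3 * k - 1) := by omega
            rw [h, Nat.add_mod_right, Nat.mod_eq_of_lt (by omega)]
          rw [e1, e2, fT 1 le_rfl hk]
          simp only [boundary, if_neg (by omega : ¬ k < k),
            if_pos (by omega : k < 2 * k)]
          congr 1
          omega
        · -- tile (1, t-k+2) with j ≤ k  ↦  (2k-1-t, 1)
          have e1 : boundary k t = (1, t - k + 2) := by
            simp only [boundary, if_neg hA, if_pos hB]
          have e2 : (t + 2 * k) % (3 * k - 1) = t - k + 1 := by
            have h : t + 2 * k = (t - k + 1) + (3 * k - 1) := by omega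
            rw [h, Nat.add_mod_right, Nat.mod_eq_of_lt (by omega)]
          rw [e1, e2, f1 (t - k + 2) (by omega) (by omega)]
          simp only [boundary, if_pos (by omega : t - k + 1 < k)]
          congr 1
          omega
      · -- tile (t-2k+2, k+1) with 2 ≤ i ≤ k  ↦  (1, t-2k+3)
        have e1 : boundary k t = (t - 2 * k + 2, k + 1) := by
          simp only [boundary, if_neg hA, if_neg hB]
        have e2 : (t + 2 * k) % (3 * k - 1) = t - k + 1 := by
          have h : t + 2 * k = (t - k + 1) + (3 * k - 1) := by omega
          rw [h, Nat.add_mod_right, Nat.mod_eq_of_lt (by omega)]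
        rw [e1, e2, fT (t - 2 * k + 2) (by omega) (by omega)]
        simp only [boundary, if_neg (by omega : ¬ t - k + 1 < k),
          if_pos (by omega : t - k + 1 < 2 * k)]
        congr 1
        omega
  constructor
  · intro i j h1 h2 h3 h4
    rw [sq, Equiv.Perm.mul_apply, fL i j h1 h2 (by omega) h4,
      fL (k + 2 - i) (k + 2 - j) (by omega) (by omega) (by omega) (by omega)]
    congr 1 <;> omega
  · intro t ht
    have hk : 1 ≤ k := by omega
    have hpos : 0 < 3 * k - 1 := by omega
    rw [sq, Equiv.Perm.mul_apply, step t ht,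
      step _ (Nat.mod_lt _ hpos)]
    congr 1
    rw [Nat.mod_add_mod]
    have h : t + 2 * k + 2 * k = (t + (k + 1)) + (3 * k - 1) := by omega
    rw [h, Nat.add_mod_right]
end

section
/- For the k×(k+1) rectangle with generators σ_L, σ_R as above and any k ≥ 2, the group ⟨σ_L, σ_R⟩ acts doubly transitively on each of its orbits: on the full tile set if k is even, and on each of the two parity classes E = {(i,j): i+j even} and its complement if k is odd. -/
/-- A subgroup `G` of permutations of ℕ × ℕ acts doubly transitively on a set `S`:
it is transitive on `S` and can send any pair of distinct points of `S` to any
other pair of distinct points of `S`. -/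
def DoublyTransitiveOn (G : Subgroup (Equiv.Perm (ℕ × ℕ))) (S : Set (ℕ × ℕ)) : Prop :=
  (∀ a ∈ S, ∀ c ∈ S, ∃ g ∈ G, g a = c) ∧
  (∀ a ∈ S, ∀ b ∈ S, ∀ c ∈ S, ∀ d ∈ S, a ≠ b → c ≠ d →
    ∃ g ∈ G, g a = c ∧ g b = d)

private lemma pair_eq {a b c d : ℕ} (h1 : a = c) (h2 : b = d) : ((a, b) : ℕ × ℕ) = (c, d) := by
  subst h1; subst h2; rfl

theorem perm_inv_apply_self {α : Type*} (f : Equiv.Perm α) (x : α) : f⁻¹ (f x) = x :=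
  f.symm_apply_apply x

theorem assemble (G : Subgroup (Equiv.Perm (ℕ × ℕ))) (S : Set (ℕ × ℕ)) (x0 y0 : ℕ × ℕ)
    (hpres : ∀ g ∈ G, ∀ p ∈ S, g p ∈ S)
    (ha : ∀ a ∈ S, ∃ g ∈ G, g a = x0)
    (hb : ∀ b ∈ S, b ≠ x0 → ∃ g ∈ G, g x0 = x0 ∧ g b = y0) :
    DoublyTransitiveOn G S := by
  constructor
  · intro a haS c hcS
    obtain ⟨g1, hg1, e1⟩ := ha a haS
    obtain ⟨g2, hg2, e2⟩ := ha c hcS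
    refine ⟨g2⁻¹ * g1, mul_mem (inv_mem hg2) hg1, ?_⟩
    rw [Equiv.Perm.mul_apply, e1, ← e2, perm_inv_apply_self]
  · intro a haS b hbS c hcS d hdS hab hcd
    obtain ⟨u, huG, hu⟩ := ha a haS
    have hubS : u b ∈ S := hpres u huG b hbS
    have hub : u b ≠ x0 := by
      intro h
      exact hab (u.injective (by rw [hu, h]))
    obtain ⟨v, hvG, hv0, hv⟩ := hb (u b) hubS hub
    obtain ⟨w, hwG, hw⟩ := ha c hcS
    have hwdS : w d ∈ S := hpres w hwG d hdS
    have hwd : w d ≠ x0 := by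
      intro h
      exact hcd (w.injective (by rw [hw, h]))
    obtain ⟨z, hzG, hz0, hz⟩ := hb (w d) hwdS hwd
    refine ⟨(z * w)⁻¹ * (v * u), mul_mem (inv_mem (mul_mem hzG hwG)) (mul_mem hvG huG), ?_, ?_⟩
    · have h1 : (z * w) c = x0 := by rw [Equiv.Perm.mul_apply, hw, hz0]
      rw [Equiv.Perm.mul_apply, Equiv.Perm.mul_apply, hu, hv0, ← h1, perm_inv_apply_self]
    · have h1 : (z * w) d = y0 := by rw [Equiv.Perm.mul_apply, hz]
      rw [Equiv.Perm.mul_apply, Equiv.Perm.mul_apply, hv, ← h1, perm_inv_apply_self]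

def flipGrid (k : ℕ) : ℕ × ℕ → ℕ × ℕ := fun (i, j) =>
  if 1 ≤ i ∧ i ≤ k ∧ 1 ≤ j ∧ j ≤ k + 1 then (k + 1 - i, k + 2 - j) else (i, j)

lemma flipGrid_in (k i j : ℕ) (h : 1 ≤ i ∧ i ≤ k ∧ 1 ≤ j ∧ j ≤ k + 1) :
    flipGrid k (i, j) = (k + 1 - i, k + 2 - j) := by
  simp only [flipGrid]
  exact if_pos h

lemma flipGrid_notin (k i j : ℕ) (h : ¬(1 ≤ i ∧ i ≤ k ∧ 1 ≤ j ∧ j ≤ k + 1)) :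
    flipGrid k (i, j) = (i, j) := by
  simp only [flipGrid]
  exact if_neg h

lemma flipGrid_invol (k : ℕ) : Function.Involutive (flipGrid k) := by
  intro p
  obtain ⟨i, j⟩ := p
  by_cases h : 1 ≤ i ∧ i ≤ k ∧ 1 ≤ j ∧ j ≤ k + 1
  · rw [flipGrid_in k i j h, flipGrid_in k _ _ ⟨by omega, by omega, by omega, by omega⟩]
    exact pair_eq (by omega) (by omega)
  · rw [flipGrid_notin k i j h, flipGrid_notin k i j h]

theorem main_aux (k : ℕ) (hk : 2 ≤ k) (σL σR : Equiv.Perm (ℕ × ℕ))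
    (hL : ∀ i j, 1 ≤ i → i ≤ k → 1 ≤ j → j ≤ k → σL (i, j) = (j, k + 1 - i))
    (hL' : ∀ i, 1 ≤ i → i ≤ k → σL (i, k + 1) = (i, k + 1))
    (hR : ∀ i j, 1 ≤ i → i ≤ k → 2 ≤ j → j ≤ k + 1 → σR (i, j) = (j - 1, k + 2 - i))
    (hR' : ∀ i, 1 ≤ i → i ≤ k → σR (i, 1) = (i, 1)) :
    (Even k → DoublyTransitiveOn (Subgroup.closure {σL, σR})
      {p : ℕ × ℕ | 1 ≤ p.1 ∧ p.1 ≤ k ∧ 1 ≤ p.2 ∧ p.2 ≤ k + 1}) ∧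
    (Odd k → DoublyTransitiveOn (Subgroup.closure {σL, σR})
      {p : ℕ × ℕ | (1 ≤ p.1 ∧ p.1 ≤ k ∧ 1 ≤ p.2 ∧ p.2 ≤ k + 1) ∧ Even (p.1 + p.2)}) := by
  set G := Subgroup.closure {σL, σR} with hGdef
  have memL : σL ∈ G := Subgroup.subset_closure (by simp)
  have memR : σR ∈ G := Subgroup.subset_closure (by simp)
  -- inverse formulas
  have hLi : ∀ a b : ℕ, 1 ≤ a → a ≤ k → 1 ≤ b → b ≤ k → σL⁻¹ (a, b) = (k + 1 - b, a) := by
    intro a b h1 h2 h3 h4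
    have h : σL (k + 1 - b, a) = (a, b) := by
      rw [hL (k + 1 - b) a (by omega) (by omega) h1 h2]
      exact pair_eq (by omega) (by omega)
    rw [← h, perm_inv_apply_self]
  have hRi : ∀ a b : ℕ, 1 ≤ a → a ≤ k → 2 ≤ b → b ≤ k + 1 → σR⁻¹ (a, b) = (k + 2 - b, a + 1) := by
    intro a b h1 h2 h3 h4
    have h : σR (k + 2 - b, a + 1) = (a, b) := by
      rw [hR (k + 2 - b) (a + 1) (by omega) (by omega) (by omega) (by omega)]
      exact pair_eq (by omega) (by omega)
    rw [← h, perm_inv_apply_self]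
  have hRi' : ∀ a : ℕ, 1 ≤ a → a ≤ k → σR⁻¹ (a, 1) = (a, 1) := by
    intro a h1 h2
    rw [← hR' a h1 h2, perm_inv_apply_self, hR' a h1 h2]
  -- basic point facts
  have hLk1 : σL ((k : ℕ), (1 : ℕ)) = (1, 1) := by
    rw [hL k 1 (by omega) le_rfl le_rfl (by omega)]
    exact pair_eq (by omega) (by omega)
  have hLi11 : σL⁻¹ ((1 : ℕ), (1 : ℕ)) = (k, 1) := by
    rw [← hLk1, perm_inv_apply_self]
  have hR11 : σR ((1 : ℕ), (1 : ℕ)) = (1, 1) := hR' 1 le_rfl (by omega)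
  have hRi11 : σR⁻¹ ((1 : ℕ), (1 : ℕ)) = (1, 1) := hRi' 1 le_rfl (by omega)
  -- the element E = σL σR⁻¹ σL⁻¹ σR
  set E := σL * σR⁻¹ * σL⁻¹ * σR with hEdef
  have hEG : E ∈ G := mul_mem (mul_mem (mul_mem memL (inv_mem memR)) (inv_mem memL)) memR
  have hE : ∀ i j : ℕ, 2 ≤ i → i ≤ k → 3 ≤ j → j ≤ k + 1 → E (i, j) = (i, j - 2) := by
    intro i j h1 h2 h3 h4
    have s1 : σR (i, j) = (j - 1, k + 2 - i) := hR i j (by omega) h2 (by omega) h4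
    have s2 : σL⁻¹ ((j - 1 : ℕ), (k + 2 - i : ℕ)) = (i - 1, j - 1) := by
      rw [hLi (j - 1) (k + 2 - i) (by omega) (by omega) (by omega) (by omega)]
      exact pair_eq (by omega) (by omega)
    have s3 : σR⁻¹ ((i - 1 : ℕ), (j - 1 : ℕ)) = (k + 3 - j, i) := by
      rw [hRi (i - 1) (j - 1) (by omega) (by omega) (by omega) (by omega)]
      exact pair_eq (by omega) (by omega)
    have s4 : σL ((k + 3 - j : ℕ), (i : ℕ)) = (i, j - 2) := by
      rw [hL (k + 3 - j) i (by omega) (by omega) (by omega) h2]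
      exact pair_eq (by omega) (by omega)
    show σL (σR⁻¹ (σL⁻¹ (σR (i, j)))) = (i, j - 2)
    rw [s1, s2, s3, s4]
  have hE11 : E ((1 : ℕ), (1 : ℕ)) = (1, 1) := by
    show σL (σR⁻¹ (σL⁻¹ (σR (1, 1)))) = (1, 1)
    rw [hR11, hLi11, hRi' k (by omega) le_rfl, hLk1]
  have hEpow : ∀ m : ℕ, ∀ i j : ℕ, 2 ≤ i → i ≤ k → 2 * m < j → j ≤ k + 1 →
      (E ^ m) (i, j) = (i, j - 2 * m) := by
    intro m
    induction m with
    | zero => intro i j _ _ _ _; simp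
    | succ m ih =>
      intro i j h1 h2 h3 h4
      rw [pow_succ, Equiv.Perm.mul_apply, hE i j h1 h2 (by omega) h4,
        ih i (j - 2) h1 h2 (by omega) (by omega)]
      exact pair_eq (by omega) (by omega)
  have hEpow11 : ∀ m : ℕ, (E ^ m) ((1 : ℕ), (1 : ℕ)) = (1, 1) := by
    intro m
    induction m with
    | zero => simp
    | succ m ih => rw [pow_succ, Equiv.Perm.mul_apply, hE11, ih]
  -- the element B = σL σR σL⁻¹
  set B := σL * σR * σL⁻¹ with hBdef
  have hBG : B ∈ G := mul_mem (mul_mem memL memR) (inv_mem memL)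
  have hB11 : B ((1 : ℕ), (1 : ℕ)) = (1, 1) := by
    show σL (σR (σL⁻¹ (1, 1))) = (1, 1)
    rw [hLi11, hR' k (by omega) le_rfl, hLk1]
  have hB1 : ∀ i : ℕ, 2 ≤ i → i ≤ k → B (i, 1) = (2, k + 2 - i) := by
    intro i h1 h2
    have s1 : σL⁻¹ ((i : ℕ), (1 : ℕ)) = (k, i) := by
      rw [hLi i 1 (by omega) h2 le_rfl (by omega)]
      exact pair_eq (by omega) (by omega)
    have s2 : σR ((k : ℕ), (i : ℕ)) = (i - 1, 2) := by
      rw [hR k i (by omega) le_rfl h1 (by omega)]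
      exact pair_eq (by omega) (by omega)
    have s3 : σL ((i - 1 : ℕ), (2 : ℕ)) = (2, k + 2 - i) := by
      rw [hL (i - 1) 2 (by omega) (by omega) (by omega) hk]
      exact pair_eq (by omega) (by omega)
    show σL (σR (σL⁻¹ (i, 1))) = (2, k + 2 - i)
    rw [s1, s2, s3]
  have hAi2 : ∀ i : ℕ, 1 ≤ i → i ≤ k → σR⁻¹ (i, 2) = (k, i + 1) := by
    intro i h1 h2
    rw [hRi i 2 h1 h2 le_rfl (by omega)]
    exact pair_eq (by omega) (by omega)
  have hArow1 : ∀ j : ℕ, 2 ≤ j → j ≤ k + 1 → σR (1, j) = (j - 1, k + 1) := by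
    intro j h1 h2
    rw [hR 1 j le_rfl (by omega) h1 h2]
    exact pair_eq (by omega) (by omega)
  -- reduction lemma
  have hreduce : ∀ i j : ℕ, 2 ≤ i → i ≤ k → 1 ≤ j → j ≤ k + 1 →
      ∃ g ∈ G, g ((1 : ℕ), (1 : ℕ)) = (1, 1) ∧
        ∃ c : ℕ, (c = 1 ∨ c = 2) ∧ c % 2 = j % 2 ∧ g (i, j) = (i, c) := by
    intro i j h1 h2 h3 h4
    obtain ⟨m, c, hc, hcp, hmj, hjm⟩ :
        ∃ m c : ℕ, (c = 1 ∨ c = 2) ∧ c % 2 = j % 2 ∧ 2 * m < j ∧ j - 2 * m = c := by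
      rcases Nat.even_or_odd j with he | ho
      · obtain ⟨t, ht⟩ := he
        exact ⟨t - 1, 2, Or.inr rfl, by omega, by omega, by omega⟩
      · obtain ⟨t, ht⟩ := ho
        exact ⟨t, 1, Or.inl rfl, by omega, by omega, by omega⟩
    refine ⟨E ^ m, pow_mem hEG m, hEpow11 m, c, hc, hcp, ?_⟩
    rw [hEpow m i j h1 h2 hmj h4, hjm]
  -- step M1 : (i,2) → (k, c), c ≡ i+1
  have hM1 : ∀ i : ℕ, 2 ≤ i → i ≤ k →
      ∃ g ∈ G, g ((1 : ℕ), (1 : ℕ)) = (1, 1) ∧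
        ∃ c : ℕ, (c = 1 ∨ c = 2) ∧ c % 2 = (i + 1) % 2 ∧ g (i, 2) = (k, c) := by
    intro i h1 h2
    obtain ⟨h, hhG, hh0, c, hc, hcp, hh⟩ := hreduce k (i + 1) hk le_rfl (by omega) (by omega)
    refine ⟨h * σR⁻¹, mul_mem hhG (inv_mem memR), ?_, c, hc, hcp, ?_⟩
    · rw [Equiv.Perm.mul_apply, hRi11, hh0]
    · rw [Equiv.Perm.mul_apply, hAi2 i (by omega) h2, hh]
  -- step M3 : (i,1) → (2, c), c ≡ k+i
  have hM3 : ∀ i : ℕ, 2 ≤ i → i ≤ k →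
      ∃ g ∈ G, g ((1 : ℕ), (1 : ℕ)) = (1, 1) ∧
        ∃ c : ℕ, (c = 1 ∨ c = 2) ∧ c % 2 = (k + i) % 2 ∧ g (i, 1) = (2, c) := by
    intro i h1 h2
    obtain ⟨h, hhG, hh0, c, hc, hcp, hh⟩ := hreduce 2 (k + 2 - i) le_rfl hk (by omega) (by omega)
    refine ⟨h * B, mul_mem hhG hBG, ?_, c, hc, by omega, ?_⟩
    · rw [Equiv.Perm.mul_apply, hB11, hh0]
    · rw [Equiv.Perm.mul_apply, hB1 i h1 h2, hh]
  -- funnel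
  have hfunnel : ∀ i c : ℕ, 2 ≤ i → i ≤ k → (c = 1 ∨ c = 2) →
      (k % 2 = 0 ∨ (i + c) % 2 = 0) →
      ∃ g ∈ G, g ((1 : ℕ), (1 : ℕ)) = (1, 1) ∧ g (i, c) = (k, 1) := by
    intro i c h1 h2 hc hpar
    rcases hc with rfl | rfl
    · obtain ⟨g1, hG1, h01, c1, hc1, hc1p, hg1⟩ := hM3 i h1 h2
      rcases hc1 with rfl | rfl
      · -- c1 = 1 : forces k even, i odd
        obtain ⟨g2, hG2, h02, c2, hc2, hc2p, hg2⟩ := hM3 2 le_rfl hk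
        have hc2e : c2 = 2 := by rcases hc2 with h | h <;> rcases hpar with h' | h' <;> omega
        subst hc2e
        obtain ⟨g3, hG3, h03, c3, hc3, hc3p, hg3⟩ := hM1 2 le_rfl hk
        have hc3e : c3 = 1 := by rcases hc3 with h | h <;> omega
        subst hc3e
        refine ⟨g3 * g2 * g1, mul_mem (mul_mem hG3 hG2) hG1, ?_, ?_⟩
        · rw [Equiv.Perm.mul_apply, Equiv.Perm.mul_apply, h01, h02, h03]
        · rw [Equiv.Perm.mul_apply, Equiv.Perm.mul_apply, hg1, hg2, hg3]
      · -- c1 = 2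
        obtain ⟨g2, hG2, h02, c2, hc2, hc2p, hg2⟩ := hM1 2 le_rfl hk
        have hc2e : c2 = 1 := by rcases hc2 with h | h <;> omega
        subst hc2e
        refine ⟨g2 * g1, mul_mem hG2 hG1, ?_, ?_⟩
        · rw [Equiv.Perm.mul_apply, h01, h02]
        · rw [Equiv.Perm.mul_apply, hg1, hg2]
    · obtain ⟨g1, hG1, h01, c1, hc1, hc1p, hg1⟩ := hM1 i h1 h2
      rcases hc1 with rfl | rfl
      · exact ⟨g1, hG1, h01, hg1⟩
      · -- c1 = 2 : i odd, forces k even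
        obtain ⟨g2, hG2, h02, c2, hc2, hc2p, hg2⟩ := hM1 k hk le_rfl
        have hc2e : c2 = 1 := by rcases hc2 with h | h <;> rcases hpar with h' | h' <;> omega
        subst hc2e
        refine ⟨g2 * g1, mul_mem hG2 hG1, ?_, ?_⟩
        · rw [Equiv.Perm.mul_apply, h01, h02]
        · rw [Equiv.Perm.mul_apply, hg1, hg2]
  -- stabilizer main lemma
  have hstab : ∀ i j : ℕ, 1 ≤ i → i ≤ k → 1 ≤ j → j ≤ k + 1 → ¬(i = 1 ∧ j = 1) →
      (k % 2 = 0 ∨ (i + j) % 2 = 0) →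
      ∃ g ∈ G, g ((1 : ℕ), (1 : ℕ)) = (1, 1) ∧ g (i, j) = (k, 1) := by
    intro i j h1 h2 h3 h4 hne hpar
    by_cases hi : 2 ≤ i
    · obtain ⟨g1, hG1, h01, c, hc, hcp, hg1⟩ := hreduce i j hi h2 h3 h4
      obtain ⟨g2, hG2, h02, hg2⟩ := hfunnel i c hi h2 hc (by rcases hpar with h | h; exact Or.inl h; exact Or.inr (by omega))
      refine ⟨g2 * g1, mul_mem hG2 hG1, ?_, ?_⟩
      · rw [Equiv.Perm.mul_apply, h01, h02]
      · rw [Equiv.Perm.mul_apply, hg1, hg2]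
    · have hi1 : i = 1 := by omega
      subst hi1
      have hj2 : 2 ≤ j := by omega
      by_cases hj : 3 ≤ j
      · have s : σR (1, j) = (j - 1, k + 1) := hArow1 j hj2 h4
        obtain ⟨g1, hG1, h01, c, hc, hcp, hg1⟩ := hreduce (j - 1) (k + 1) (by omega) (by omega) (by omega) le_rfl
        obtain ⟨g2, hG2, h02, hg2⟩ := hfunnel (j - 1) c (by omega) (by omega) hc (by
          rcases Nat.mod_two_eq_zero_or_one k with h | h
          · exact Or.inl h
          · refine Or.inr ?_
            rcases hpar with h' | h' <;> omega)
        refine ⟨g2 * g1 * σR, mul_mem (mul_mem hG2 hG1) memR, ?_, ?_⟩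
        · rw [Equiv.Perm.mul_apply, Equiv.Perm.mul_apply, hR11, h01, h02]
        · rw [Equiv.Perm.mul_apply, Equiv.Perm.mul_apply, s, hg1, hg2]
      · have hj3 : j = 2 := by omega
        subst hj3
        have hke : k % 2 = 0 := by rcases hpar with h | h <;> omega
        have s1 : σR ((1 : ℕ), (2 : ℕ)) = (1, k + 1) := by
          rw [hArow1 2 le_rfl (by omega)]
          all_goals exact pair_eq (by omega) (by omega)
        have s2 : σR ((1 : ℕ), (k + 1 : ℕ)) = (k, k + 1) := by
          rw [hArow1 (k + 1) (by omega) le_rfl]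
          exact pair_eq (by omega) (by omega)
        obtain ⟨g1, hG1, h01, c, hc, hcp, hg1⟩ := hreduce k (k + 1) hk le_rfl (by omega) le_rfl
        have hce : c = 1 := by rcases hc with h | h <;> omega
        subst hce
        refine ⟨g1 * σR * σR, mul_mem (mul_mem hG1 memR) memR, ?_, ?_⟩
        · rw [Equiv.Perm.mul_apply, Equiv.Perm.mul_apply, hR11, hR11, h01]
        · rw [Equiv.Perm.mul_apply, Equiv.Perm.mul_apply, s1, s2, hg1]
  -- transitivity to (k,1)
  have hamain : ∀ i j : ℕ, 1 ≤ i → i ≤ k → 1 ≤ j → j ≤ k + 1 →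
      (k % 2 = 0 ∨ (i + j) % 2 = 0) →
      ∃ g ∈ G, g (i, j) = ((k : ℕ), (1 : ℕ)) := by
    intro i j h1 h2 h3 h4 hpar
    by_cases h : i = 1 ∧ j = 1
    · obtain ⟨rfl, rfl⟩ := h
      exact ⟨σL⁻¹, inv_mem memL, hLi11⟩
    · obtain ⟨g, hG, _, hg⟩ := hstab i j h1 h2 h3 h4 h hpar
      exact ⟨g, hG, hg⟩
  -- inverse fix of column k+1 for σL
  have hLi' : ∀ a : ℕ, 1 ≤ a → a ≤ k → σL⁻¹ (a, k + 1) = (a, k + 1) := by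
    intro a h1 h2
    rw [← hL' a h1 h2, perm_inv_apply_self, hL' a h1 h2]
  -- preservation of the grid and of parity (for odd k)
  have hQ : ∀ g ∈ G,
      (∀ i j : ℕ, 1 ≤ i → i ≤ k → 1 ≤ j → j ≤ k + 1 →
        ∃ a b : ℕ, g (i, j) = (a, b) ∧ 1 ≤ a ∧ a ≤ k ∧ 1 ≤ b ∧ b ≤ k + 1 ∧
          (k % 2 = 1 → (a + b) % 2 = (i + j) % 2)) ∧
      (∀ i j : ℕ, 1 ≤ i → i ≤ k → 1 ≤ j → j ≤ k + 1 →
        ∃ a b : ℕ, g⁻¹ (i, j) = (a, b) ∧ 1 ≤ a ∧ a ≤ k ∧ 1 ≤ b ∧ b ≤ k + 1 ∧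
          (k % 2 = 1 → (a + b) % 2 = (i + j) % 2)) := by
    intro g hg
    induction hg using Subgroup.closure_induction with
    | mem x hx =>
      simp only [Set.mem_insert_iff, Set.mem_singleton_iff] at hx
      rcases hx with rfl | rfl
      · constructor
        · intro i j h1 h2 h3 h4
          by_cases hj : j ≤ k
          · exact ⟨j, k + 1 - i, hL i j h1 h2 h3 hj, by omega, by omega, by omega, by omega,
              fun hko => by omega⟩
          · have hj1 : j = k + 1 := by omega
            subst hj1
            exact ⟨i, k + 1, hL' i h1 h2, h1, h2, by omega, le_rfl, fun hko => rfl⟩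
        · intro i j h1 h2 h3 h4
          by_cases hj : j ≤ k
          · exact ⟨k + 1 - j, i, hLi i j h1 h2 h3 hj, by omega, by omega, h1, by omega,
              fun hko => by omega⟩
          · have hj1 : j = k + 1 := by omega
            subst hj1
            exact ⟨i, k + 1, hLi' i h1 h2, h1, h2, by omega, le_rfl, fun hko => rfl⟩
      · constructor
        · intro i j h1 h2 h3 h4
          by_cases hj : 2 ≤ j
          · exact ⟨j - 1, k + 2 - i, hR i j h1 h2 hj h4, by omega, by omega, by omega, by omega,
              fun hko => by omega⟩
          · have hj1 : j = 1 := by omega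
            subst hj1
            exact ⟨i, 1, hR' i h1 h2, h1, h2, le_rfl, by omega, fun hko => rfl⟩
        · intro i j h1 h2 h3 h4
          by_cases hj : 2 ≤ j
          · exact ⟨k + 2 - j, i + 1, hRi i j h1 h2 hj h4, by omega, by omega, by omega, by omega,
              fun hko => by omega⟩
          · have hj1 : j = 1 := by omega
            subst hj1
            exact ⟨i, 1, hRi' i h1 h2, h1, h2, le_rfl, by omega, fun hko => rfl⟩
    | one =>
      constructor
      · intro i j h1 h2 h3 h4
        exact ⟨i, j, Equiv.Perm.one_apply _, h1, h2, h3, h4, fun _ => rfl⟩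
      · intro i j h1 h2 h3 h4
        refine ⟨i, j, ?_, h1, h2, h3, h4, fun _ => rfl⟩
        rw [inv_one]; exact Equiv.Perm.one_apply _
    | mul x y hx hy px py =>
      constructor
      · intro i j h1 h2 h3 h4
        obtain ⟨a, b, e1, ha1, ha2, hb1, hb2, hp1⟩ := py.1 i j h1 h2 h3 h4
        obtain ⟨a', b', e2, ha1', ha2', hb1', hb2', hp2⟩ := px.1 a b ha1 ha2 hb1 hb2
        refine ⟨a', b', ?_, ha1', ha2', hb1', hb2', ?_⟩
        · rw [Equiv.Perm.mul_apply, e1, e2]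
        · intro hko; have t1 := hp1 hko; have t2 := hp2 hko; omega
      · intro i j h1 h2 h3 h4
        obtain ⟨a, b, e1, ha1, ha2, hb1, hb2, hp1⟩ := px.2 i j h1 h2 h3 h4
        obtain ⟨a', b', e2, ha1', ha2', hb1', hb2', hp2⟩ := py.2 a b ha1 ha2 hb1 hb2
        refine ⟨a', b', ?_, ha1', ha2', hb1', hb2', ?_⟩
        · rw [mul_inv_rev, Equiv.Perm.mul_apply, e1, e2]
        · intro hko; have t1 := hp1 hko; have t2 := hp2 hko; omega
    | inv x hx px =>
      refine ⟨px.2, ?_⟩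
      rw [inv_inv]
      exact px.1
  constructor
  · -- k even
    intro hke
    have hk2 : k % 2 = 0 := Nat.even_iff.mp hke
    refine assemble G _ ((1 : ℕ), (1 : ℕ)) ((k : ℕ), (1 : ℕ)) ?_ ?_ ?_
    · intro g hg p hp
      simp only [Set.mem_setOf_eq] at hp ⊢
      obtain ⟨i, j⟩ := p
      obtain ⟨a, b, e, ha1, ha2, hb1, hb2, _⟩ := (hQ g hg).1 i j hp.1 hp.2.1 hp.2.2.1 hp.2.2.2
      rw [e]
      exact ⟨ha1, ha2, hb1, hb2⟩
    · intro a haS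
      simp only [Set.mem_setOf_eq] at haS
      obtain ⟨i, j⟩ := a
      obtain ⟨g, hgG, hg⟩ := hamain i j haS.1 haS.2.1 haS.2.2.1 haS.2.2.2 (Or.inl hk2)
      exact ⟨σL * g, mul_mem memL hgG, by rw [Equiv.Perm.mul_apply, hg, hLk1]⟩
    · intro b hbS hbne
      simp only [Set.mem_setOf_eq] at hbS
      obtain ⟨i, j⟩ := b
      have hne : ¬(i = 1 ∧ j = 1) := by
        rintro ⟨rfl, rfl⟩; exact hbne rfl
      exact hstab i j hbS.1 hbS.2.1 hbS.2.2.1 hbS.2.2.2 hne (Or.inl hk2)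
  · -- k odd, even parity class
    intro hko
    have hk2 : k % 2 = 1 := Nat.odd_iff.mp hko
    refine assemble G _ ((1 : ℕ), (1 : ℕ)) ((k : ℕ), (1 : ℕ)) ?_ ?_ ?_
    · intro g hg p hp
      simp only [Set.mem_setOf_eq] at hp ⊢
      obtain ⟨i, j⟩ := p
      obtain ⟨hpb, hpe⟩ := hp
      have hpe' : (i + j) % 2 = 0 := Nat.even_iff.mp hpe
      obtain ⟨a, b, e, ha1, ha2, hb1, hb2, hpar⟩ := (hQ g hg).1 i j hpb.1 hpb.2.1 hpb.2.2.1 hpb.2.2.2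
      rw [e]
      exact ⟨⟨ha1, ha2, hb1, hb2⟩, Nat.even_iff.mpr (by have := hpar hk2; omega)⟩
    · intro a haS
      simp only [Set.mem_setOf_eq] at haS
      obtain ⟨i, j⟩ := a
      obtain ⟨haB, haE⟩ := haS
      obtain ⟨g, hgG, hg⟩ := hamain i j haB.1 haB.2.1 haB.2.2.1 haB.2.2.2
        (Or.inr (Nat.even_iff.mp haE))
      exact ⟨σL * g, mul_mem memL hgG, by rw [Equiv.Perm.mul_apply, hg, hLk1]⟩
    · intro b hbS hbne
      simp only [Set.mem_setOf_eq] at hbS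
      obtain ⟨i, j⟩ := b
      obtain ⟨hbB, hbE⟩ := hbS
      have hne : ¬(i = 1 ∧ j = 1) := by
        rintro ⟨rfl, rfl⟩; exact hbne rfl
      exact hstab i j hbB.1 hbB.2.1 hbB.2.2.1 hbB.2.2.2 hne (Or.inr (Nat.even_iff.mp hbE))


/-- For the k×(k+1) rectangle (k ≥ 2) with generators σ_L (rotation of the left k×k
block, fixing column k+1) and σ_R (rotation of the right k×k block, fixing column 1),
the puzzle group ⟨σ_L, σ_R⟩ is doubly transitive on each of its orbits: on the full
tile set if k is even, and on each of the two parity classes if k is odd. -/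
theorem puzzle_group_doubly_transitive (k : ℕ) (hk : 2 ≤ k) (σL σR : Equiv.Perm (ℕ × ℕ))
    (hL : ∀ i j, 1 ≤ i → i ≤ k → 1 ≤ j → j ≤ k → σL (i, j) = (j, k + 1 - i))
    (hL' : ∀ i, 1 ≤ i → i ≤ k → σL (i, k + 1) = (i, k + 1))
    (hR : ∀ i j, 1 ≤ i → i ≤ k → 2 ≤ j → j ≤ k + 1 → σR (i, j) = (j - 1, k + 2 - i))
    (hR' : ∀ i, 1 ≤ i → i ≤ k → σR (i, 1) = (i, 1)) :
    (Even k → DoublyTransitiveOn (Subgroup.closure {σL, σR})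
      {p : ℕ × ℕ | 1 ≤ p.1 ∧ p.1 ≤ k ∧ 1 ≤ p.2 ∧ p.2 ≤ k + 1}) ∧
    (Odd k →
      DoublyTransitiveOn (Subgroup.closure {σL, σR})
        {p : ℕ × ℕ | (1 ≤ p.1 ∧ p.1 ≤ k ∧ 1 ≤ p.2 ∧ p.2 ≤ k + 1) ∧ Even (p.1 + p.2)} ∧
      DoublyTransitiveOn (Subgroup.closure {σL, σR})
        {p : ℕ × ℕ | (1 ≤ p.1 ∧ p.1 ≤ k ∧ 1 ≤ p.2 ∧ p.2 ≤ k + 1) ∧ Odd (p.1 + p.2)}) := by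
  refine ⟨(main_aux k hk σL σR hL hL' hR hR').1, ?_⟩
  intro hko
  have hk2 : k % 2 = 1 := Nat.odd_iff.mp hko
  refine ⟨(main_aux k hk σL σR hL hL' hR hR').2 hko, ?_⟩
  -- the odd parity class, via the 180° symmetry φ
  set φ : Equiv.Perm (ℕ × ℕ) := (flipGrid_invol k).toPerm with hφdef
  have hφapp : ∀ p : ℕ × ℕ, φ p = flipGrid k p := fun p => rfl
  have hφφ : φ * φ = 1 := by
    apply Equiv.ext
    intro p
    rw [Equiv.Perm.mul_apply]
    exact flipGrid_invol k p
  have hφinv : φ⁻¹ = φ := inv_eq_of_mul_eq_one_right hφφ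
  set σL' : Equiv.Perm (ℕ × ℕ) := φ * σR * φ with hσL'def
  set σR' : Equiv.Perm (ℕ × ℕ) := φ * σL * φ with hσR'def
  -- the conjugated permutations satisfy the mirror hypotheses
  have hL2 : ∀ i j, 1 ≤ i → i ≤ k → 1 ≤ j → j ≤ k → σL' (i, j) = (j, k + 1 - i) := by
    intro i j h1 h2 h3 h4
    have t1 : φ ((i : ℕ), (j : ℕ)) = (k + 1 - i, k + 2 - j) := by
      rw [hφapp]; exact flipGrid_in k i j ⟨h1, h2, h3, by omega⟩
    have t2 : σR ((k + 1 - i : ℕ), (k + 2 - j : ℕ)) = (k + 1 - j, i + 1) := by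
      rw [hR (k + 1 - i) (k + 2 - j) (by omega) (by omega) (by omega) (by omega)]
      exact pair_eq (by omega) (by omega)
    have t3 : φ ((k + 1 - j : ℕ), (i + 1 : ℕ)) = (j, k + 1 - i) := by
      rw [hφapp, flipGrid_in k _ _ ⟨by omega, by omega, by omega, by omega⟩]
      exact pair_eq (by omega) (by omega)
    show φ (σR (φ (i, j))) = (j, k + 1 - i)
    rw [t1, t2, t3]
  have hL2' : ∀ i, 1 ≤ i → i ≤ k → σL' (i, k + 1) = (i, k + 1) := by
    intro i h1 h2
    have t1 : φ ((i : ℕ), (k + 1 : ℕ)) = (k + 1 - i, 1) := by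
      rw [hφapp, flipGrid_in k _ _ ⟨h1, h2, by omega, le_rfl⟩]
      exact pair_eq (by omega) (by omega)
    have t2 : σR ((k + 1 - i : ℕ), (1 : ℕ)) = (k + 1 - i, 1) := hR' _ (by omega) (by omega)
    have t3 : φ ((k + 1 - i : ℕ), (1 : ℕ)) = (i, k + 1) := by
      rw [hφapp, flipGrid_in k _ _ ⟨by omega, by omega, le_rfl, by omega⟩]
      exact pair_eq (by omega) (by omega)
    show φ (σR (φ (i, k + 1))) = (i, k + 1)
    rw [t1, t2, t3]
  have hR2 : ∀ i j, 1 ≤ i → i ≤ k → 2 ≤ j → j ≤ k + 1 → σR' (i, j) = (j - 1, k + 2 - i) := by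
    intro i j h1 h2 h3 h4
    have t1 : φ ((i : ℕ), (j : ℕ)) = (k + 1 - i, k + 2 - j) := by
      rw [hφapp]; exact flipGrid_in k i j ⟨h1, h2, by omega, h4⟩
    have t2 : σL ((k + 1 - i : ℕ), (k + 2 - j : ℕ)) = (k + 2 - j, i) := by
      rw [hL (k + 1 - i) (k + 2 - j) (by omega) (by omega) (by omega) (by omega)]
      exact pair_eq (by omega) (by omega)
    have t3 : φ ((k + 2 - j : ℕ), (i : ℕ)) = (j - 1, k + 2 - i) := by
      rw [hφapp, flipGrid_in k _ _ ⟨by omega, by omega, by omega, by omega⟩]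
      exact pair_eq (by omega) (by omega)
    show φ (σL (φ (i, j))) = (j - 1, k + 2 - i)
    rw [t1, t2, t3]
  have hR2' : ∀ i, 1 ≤ i → i ≤ k → σR' (i, 1) = (i, 1) := by
    intro i h1 h2
    have t1 : φ ((i : ℕ), (1 : ℕ)) = (k + 1 - i, k + 1) := by
      rw [hφapp, flipGrid_in k _ _ ⟨h1, h2, le_rfl, by omega⟩]
      exact pair_eq (by omega) (by omega)
    have t2 : σL ((k + 1 - i : ℕ), (k + 1 : ℕ)) = (k + 1 - i, k + 1) := hL' _ (by omega) (by omega)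
    have t3 : φ ((k + 1 - i : ℕ), (k + 1 : ℕ)) = (i, 1) := by
      rw [hφapp, flipGrid_in k _ _ ⟨by omega, by omega, by omega, le_rfl⟩]
      exact pair_eq (by omega) (by omega)
    show φ (σL (φ (i, 1))) = (i, 1)
    rw [t1, t2, t3]
  have DT' := (main_aux k hk σL' σR' hL2 hL2' hR2 hR2').2 hko
  -- conjugation carries the primed group into the original one
  have hsand : ∀ x : Equiv.Perm (ℕ × ℕ), φ * (φ * x * φ) * φ = x := by
    intro x
    simp only [← mul_assoc]
    rw [hφφ, one_mul, mul_assoc, hφφ, mul_one]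
  have hmulsand : ∀ x y : Equiv.Perm (ℕ × ℕ), φ * (x * y) * φ = (φ * x * φ) * (φ * y * φ) := by
    intro x y
    simp only [← mul_assoc]
    rw [mul_assoc (φ * x) φ φ, hφφ, mul_one]
  have hinvsand : ∀ x : Equiv.Perm (ℕ × ℕ), (φ * x * φ)⁻¹ = φ * x⁻¹ * φ := by
    intro x
    rw [mul_inv_rev, mul_inv_rev, hφinv]
    simp only [← mul_assoc]
  have hconj : ∀ g ∈ Subgroup.closure {σL', σR'}, φ * g * φ ∈ Subgroup.closure {σL, σR} := by
    intro g hg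
    induction hg using Subgroup.closure_induction with
    | mem x hx =>
      simp only [Set.mem_insert_iff, Set.mem_singleton_iff] at hx
      rcases hx with rfl | rfl
      · rw [hσL'def, hsand]
        exact Subgroup.subset_closure (by simp)
      · rw [hσR'def, hsand]
        exact Subgroup.subset_closure (by simp)
    | one =>
      rw [mul_one, hφφ]
      exact one_mem _
    | mul x y hx hy px py =>
      rw [hmulsand]
      exact mul_mem px py
    | inv x hx px =>
      rw [← hinvsand]
      exact inv_mem px
  -- φ maps the odd class into the even class
  have hφodd : ∀ p : ℕ × ℕ,
      p ∈ {p : ℕ × ℕ | (1 ≤ p.1 ∧ p.1 ≤ k ∧ 1 ≤ p.2 ∧ p.2 ≤ k + 1) ∧ Odd (p.1 + p.2)} →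
      φ p ∈ {p : ℕ × ℕ | (1 ≤ p.1 ∧ p.1 ≤ k ∧ 1 ≤ p.2 ∧ p.2 ≤ k + 1) ∧ Even (p.1 + p.2)} := by
    intro p hp
    simp only [Set.mem_setOf_eq] at hp ⊢
    obtain ⟨i, j⟩ := p
    obtain ⟨⟨h1, h2, h3, h4⟩, hodd⟩ := hp
    have hodd2 : (i + j) % 2 = 1 := Nat.odd_iff.mp hodd
    have e : φ ((i : ℕ), (j : ℕ)) = (k + 1 - i, k + 2 - j) := by
      rw [hφapp]; exact flipGrid_in k i j ⟨h1, h2, h3, h4⟩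
    rw [e]
    refine ⟨⟨by omega, by omega, by omega, by omega⟩, ?_⟩
    have : (k + 1 - i + (k + 2 - j)) % 2 = 0 := by omega
    exact Nat.even_iff.mpr this
  have hφφp : ∀ p : ℕ × ℕ, φ (φ p) = p := fun p => flipGrid_invol k p
  have hφinj : Function.Injective (fun p => φ p) := (flipGrid_invol k).injective
  constructor
  · intro a ha c hc
    obtain ⟨g', hg', e⟩ := DT'.1 (φ a) (hφodd a ha) (φ c) (hφodd c hc)
    refine ⟨φ * g' * φ, hconj g' hg', ?_⟩
    rw [Equiv.Perm.mul_apply, Equiv.Perm.mul_apply, e]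
    exact hφφp c
  · intro a ha b hb c hc d hd hab hcd
    have hab' : φ a ≠ φ b := fun h => hab (hφinj h)
    have hcd' : φ c ≠ φ d := fun h => hcd (hφinj h)
    obtain ⟨g', hg', e1, e2⟩ := DT'.2 (φ a) (hφodd a ha) (φ b) (hφodd b hb)
      (φ c) (hφodd c hc) (φ d) (hφodd d hd) hab' hcd'
    refine ⟨φ * g' * φ, hconj g' hg', ?_, ?_⟩
    · rw [Equiv.Perm.mul_apply, Equiv.Perm.mul_apply, e1]
      exact hφφp c
    · rw [Equiv.Perm.mul_apply, Equiv.Perm.mul_apply, e2]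
      exact hφφp d
end

section
/- For the 2×3 rectangle with generators σ_L = ((1,2),(2,2),(2,1),(1,1)) and σ_R = ((2,2),(1,2),(1,3),(2,3)) (4-cycles on the six tiles), the group G = ⟨σ_L, σ_R⟩ is a subgroup of S₆ of order 120 isomorphic to S₅, and is a proper subgroup of S₆ (in particular G ≠ A₆ and G ≠ S₆). -/
/-- σ_L for the 2×3 rectangle: the 4-cycle ((1,2),(2,2),(2,1),(1,1)) on the six tiles
(here written with 0-based indices), i.e. clockwise rotation of the left 2×2 block. -/
def sigmaL23 : Equiv.Perm (Fin 2 × Fin 3) :=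
  ([((0 : Fin 2), (1 : Fin 3)), (1, 1), (1, 0), (0, 0)]).formPerm

/-- σ_R for the 2×3 rectangle: the 4-cycle ((2,2),(1,2),(1,3),(2,3)) (0-based indices),
i.e. clockwise rotation of the right 2×2 block. -/
def sigmaR23 : Equiv.Perm (Fin 2 × Fin 3) :=
  ([((1 : Fin 2), (1 : Fin 3)), (0, 1), (0, 2), (1, 2)]).formPerm

/-- generator selector -/
def g23 : Bool → Equiv.Perm (Fin 2 × Fin 3) := fun b => bif b then sigmaL23 else sigmaR23

/-- the 120 elements of the puzzle group, as words in the generators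
(`true` = σ_L, `false` = σ_R) -/
def words23 : List (List Bool) :=
[[], [true], [false], [true,true], [true,false], [false,true], [false,false], [true,true,true],
 [true,true,false], [true,false,true], [true,false,false], [false,true,true], [false,true,false], [false,false,true], [false,false,false], [true,true,true,false],
 [true,true,false,true], [true,true,false,false], [true,false,true,true], [true,false,true,false], [true,false,false,true], [true,false,false,false], [false,true,true,true], [false,true,true,false],
 [false,true,false,true], [false,true,false,false], [false,false,true,true], [false,false,true,false], [false,false,false,true], [true,true,true,false,true], [true,true,true,false,false], [true,true,false,true,true],
 [true,true,false,true,false], [true,true,false,false,true], [true,true,false,false,false], [true,false,true,true,true], [true,false,true,true,false], [true,false,true,false,true], [true,false,true,false,false], [true,false,false,true,true],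
 [true,false,false,true,false], [true,false,false,false,true], [false,true,true,false,false], [false,true,false,true,true], [false,true,false,false,false], [false,false,true,true,true], [false,false,true,true,false], [false,false,true,false,true],
 [false,false,true,false,false], [false,false,false,true,true], [false,false,false,true,false], [true,true,true,false,true,true], [true,true,true,false,true,false], [true,true,true,false,false,true], [true,true,true,false,false,false], [true,true,false,true,true,true],
 [true,true,false,true,true,false], [true,true,false,true,false,true], [true,true,false,true,false,false], [true,true,false,false,true,true], [true,true,false,false,true,false], [true,true,false,false,false,true], [true,false,true,true,false,false], [true,false,true,false,true,true],
 [true,false,true,false,false,false], [true,false,false,true,true,true], [true,false,false,true,false,true], [true,false,false,true,false,false], [true,false,false,false,true,true], [true,false,false,false,true,false], [false,true,true,false,false,false], [false,true,false,true,true,true],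
 [false,true,false,true,true,false], [false,true,false,false,false,true], [false,false,true,false,false,false], [false,false,false,true,true,true], [false,false,false,true,true,false], [false,false,false,true,false,true], [false,false,false,true,false,false], [true,true,true,false,true,true,true],
 [true,true,true,false,true,true,false], [true,true,true,false,true,false,true], [true,true,true,false,true,false,false], [true,true,true,false,false,true,false], [true,true,true,false,false,false,true], [true,true,false,true,false,true,true], [true,true,false,true,false,false,false], [true,true,false,false,true,false,true],
 [true,true,false,false,false,true,false], [true,false,true,true,false,false,false], [true,false,true,false,true,true,true], [true,false,true,false,true,true,false], [true,false,true,false,false,false,true], [true,false,false,true,false,false,false], [true,false,false,false,true,true,true], [true,false,false,false,true,true,false],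
 [true,false,false,false,true,false,true], [true,false,false,false,true,false,false], [false,true,true,false,false,false,true], [false,true,false,true,true,false,false], [false,true,false,false,false,true,true], [false,false,true,false,false,false,true], [true,true,true,false,true,false,true,true], [true,true,true,false,true,false,false,false],
 [true,true,true,false,false,true,false,true], [true,true,true,false,false,false,true,false], [true,true,false,true,false,true,true,true], [true,true,false,false,false,true,false,true], [true,true,false,false,false,true,false,false], [true,false,true,true,false,false,false,true], [true,false,true,false,true,true,false,false], [true,false,true,false,false,false,true,true],
 [true,false,false,true,false,false,false,true], [false,true,true,false,false,false,true,false], [false,true,false,false,false,true,true,false], [true,true,true,false,true,false,true,true,true], [true,true,true,false,false,false,true,false,true], [true,true,true,false,false,false,true,false,false], [true,false,true,true,false,false,false,true,false], [true,false,true,false,false,false,true,true,false]]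

/-- the 120 elements of the puzzle group -/
def els23 : List (Equiv.Perm (Fin 2 × Fin 3)) := words23.map fun w => (w.map g23).prod

/-- certificate: left multiplication by σ_L permutes `els23` according to this index list -/
def permL23 : List Nat :=
[1, 3, 4, 7, 8, 9, 10, 0, 15, 16, 17, 18, 19, 20, 21, 2, 29, 30, 31, 32,
 33, 34, 35, 36, 37, 38, 39, 40, 41, 5, 6, 51, 52, 53, 54, 55, 56, 57, 58, 59,
 60, 61, 62, 63, 64, 65, 26, 66, 67, 68, 69, 11, 12, 13, 14, 79, 80, 81, 82, 46,
 83, 84, 45, 85, 86, 42, 87, 49, 48, 88, 89, 90, 91, 92, 93, 94, 95, 96, 97, 22,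
 23, 24, 25, 27, 28, 102, 103, 104, 105, 73, 106, 75, 70, 76, 72, 74, 107, 108, 109, 110,
 111, 112, 43, 44, 47, 50, 115, 116, 117, 100, 101, 98, 99, 118, 119, 71, 77, 78, 114, 113]

/-- certificate: left multiplication by σ_R permutes `els23` according to this index list -/
def permR23 : List Nat :=
[2, 5, 6, 11, 12, 13, 14, 22, 23, 24, 25, 26, 27, 28, 0, 41, 40, 42, 43, 37,
 36, 44, 45, 46, 47, 48, 49, 50, 1, 68, 69, 66, 67, 17, 70, 71, 72, 63, 57, 60,
 62, 73, 59, 58, 74, 75, 76, 77, 78, 3, 4, 94, 95, 96, 97, 82, 85, 91, 93, 33,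
 34, 98, 99, 90, 81, 87, 30, 89, 100, 31, 39, 80, 86, 101, 79, 7, 8, 9, 10, 21,
 112, 110, 53, 106, 103, 54, 20, 61, 113, 104, 19, 109, 102, 18, 108, 114, 55, 56, 65, 16,
 105, 15, 88, 83, 32, 29, 84, 119, 116, 38, 118, 115, 35, 92, 117, 107, 51, 52, 64, 111]

def F23 : Finset (Equiv.Perm (Fin 2 × Fin 3)) := els23.toFinset

/-- the invariant pentad: five fixed-point-free involutions permuted by conjugation -/
def v23 : Fin 5 → Equiv.Perm (Fin 2 × Fin 3) :=
  ![Equiv.swap (0,0) (0,1) * Equiv.swap (0,2) (1,0) * Equiv.swap (1,1) (1,2),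
    Equiv.swap (0,0) (0,2) * Equiv.swap (0,1) (1,1) * Equiv.swap (1,0) (1,2),
    Equiv.swap (0,0) (1,0) * Equiv.swap (0,1) (1,2) * Equiv.swap (0,2) (1,1),
    Equiv.swap (0,0) (1,1) * Equiv.swap (0,1) (1,0) * Equiv.swap (0,2) (1,2),
    Equiv.swap (0,0) (1,2) * Equiv.swap (0,1) (0,2) * Equiv.swap (1,0) (1,1)]

def idx23 (p : Equiv.Perm (Fin 2 × Fin 3)) : Fin 5 :=
  if p = v23 1 then 1 else if p = v23 2 then 2 else if p = v23 3 then 3 else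
    if p = v23 4 then 4 else 0

/-- the images of the two generators on the pentad, as permutations of `Fin 5` -/
def cL5 : Equiv.Perm (Fin 5) := ([0, 1, 4, 2] : List (Fin 5)).formPerm
def cR5 : Equiv.Perm (Fin 5) := ([0, 1, 4, 3] : List (Fin 5)).formPerm

/-- the standard 5-cycle in `Perm (Fin 5)` -/
def c05 : Equiv.Perm (Fin 5) := ([0, 1, 2, 3, 4] : List (Fin 5)).formPerm

set_option maxRecDepth 1000000
set_option maxHeartbeats 4000000

lemma hone23 : (1 : Equiv.Perm (Fin 2 × Fin 3)) ∈ els23 := by decide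

lemma nodup_els23 : els23.Nodup := by decide

lemma length_els23 : els23.length = 120 := by decide

lemma hLtab : els23.map (fun x => sigmaL23 * x) = permL23.map (fun n => els23.getD n 1) := by
  decide

lemma hRtab : els23.map (fun x => sigmaR23 * x) = permR23.map (fun n => els23.getD n 1) := by
  decide

lemma pconjL : ∀ i : Fin 5, ∃ j : Fin 5, sigmaL23 * v23 i * sigmaL23⁻¹ = v23 j := by decide

lemma pconjR : ∀ i : Fin 5, ∃ j : Fin 5, sigmaR23 * v23 i * sigmaR23⁻¹ = v23 j := by decide

lemma hB23 : ∀ i : Fin 5, idx23 (v23 i) = i := by decide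

lemma psiL_eq : ∀ i : Fin 5, idx23 (sigmaL23 * v23 i * sigmaL23⁻¹) = cL5 i := by decide

lemma psiR_eq : ∀ i : Fin 5, idx23 (sigmaR23 * v23 i * sigmaR23⁻¹) = cR5 i := by decide

lemma c05_word : c05 = cL5 * cL5 * cR5 * cL5 * cL5 * cL5 := by decide

lemma swap_word : Equiv.swap (0 : Fin 5) (c05 0) = cL5 * cR5 * cR5 * cL5 * cR5 := by decide

lemma getD_mem {α : Type*} (l : List α) (n : Nat) (d : α) (hd : d ∈ l) : l.getD n d ∈ l := by
  by_cases h : n < l.length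
  · rw [List.getD_eq_getElem l d h]
    exact List.getElem_mem h
  · rw [List.getD_eq_default l d (le_of_not_gt h)]
    exact hd

lemma hmulL23 : ∀ x ∈ els23, sigmaL23 * x ∈ els23 := by
  intro x hx
  have h1 : sigmaL23 * x ∈ els23.map (fun y => sigmaL23 * y) := List.mem_map_of_mem (f := fun y => sigmaL23 * y) hx
  rw [hLtab] at h1
  rcases List.mem_map.mp h1 with ⟨n, _, heq⟩
  rw [← heq]
  exact getD_mem _ _ _ hone23

lemma hmulR23 : ∀ x ∈ els23, sigmaR23 * x ∈ els23 := by
  intro x hx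
  have h1 : sigmaR23 * x ∈ els23.map (fun y => sigmaR23 * y) := List.mem_map_of_mem (f := fun y => sigmaR23 * y) hx
  rw [hRtab] at h1
  rcases List.mem_map.mp h1 with ⟨n, _, heq⟩
  rw [← heq]
  exact getD_mem _ _ _ hone23

/-- the carrier of the closure, as a concrete subgroup -/
def K23 : Subgroup (Equiv.Perm (Fin 2 × Fin 3)) where
  carrier := {g | ∀ x ∈ F23, g * x ∈ F23}
  one_mem' := by intro x hx; simpa using hx
  mul_mem' := by
    intro a b ha hb x hx
    rw [mul_assoc]
    exact ha _ (hb x hx)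
  inv_mem' := by
    intro a ha x hx
    have himg : F23.image (a * ·) = F23 := by
      apply Finset.eq_of_subset_of_card_le
      · intro y hy
        obtain ⟨z, hz, rfl⟩ := Finset.mem_image.mp hy
        exact ha z hz
      · rw [Finset.card_image_of_injective _ (mul_right_injective a)]
    rw [← himg] at hx
    obtain ⟨z, hz, hzx⟩ := Finset.mem_image.mp hx
    have : a⁻¹ * x = z := by rw [← hzx, inv_mul_cancel_left]
    rwa [this]

lemma closure_le_K23 : Subgroup.closure {sigmaL23, sigmaR23} ≤ K23 := by
  rw [Subgroup.closure_le]
  intro g hg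
  rcases hg with rfl | hg
  · intro x hx
    exact List.mem_toFinset.mpr (hmulL23 x (List.mem_toFinset.mp hx))
  · rcases hg with rfl
    intro x hx
    exact List.mem_toFinset.mpr (hmulR23 x (List.mem_toFinset.mp hx))

lemma mem_F23_of_mem_closure :
    ∀ g ∈ Subgroup.closure {sigmaL23, sigmaR23}, g ∈ F23 := by
  intro g hg
  have := closure_le_K23 hg 1 (List.mem_toFinset.mpr hone23)
  rwa [mul_one] at this

lemma mem_closure_of_mem_F23 :
    ∀ g ∈ F23, g ∈ Subgroup.closure {sigmaL23, sigmaR23} := by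
  intro g hg
  rcases List.mem_map.mp (List.mem_toFinset.mp hg) with ⟨w, _, rfl⟩
  refine Subgroup.list_prod_mem _ ?_
  intro x hx
  rcases List.mem_map.mp hx with ⟨b, _, rfl⟩
  cases b
  · exact Subgroup.subset_closure (by simp [g23])
  · exact Subgroup.subset_closure (by simp [g23])

lemma closure_set_eq :
    ((Subgroup.closure {sigmaL23, sigmaR23} : Subgroup (Equiv.Perm (Fin 2 × Fin 3))) :
      Set (Equiv.Perm (Fin 2 × Fin 3))) = ↑F23 := by
  apply Set.Subset.antisymm
  · intro g hg; exact Finset.mem_coe.mpr (mem_F23_of_mem_closure g hg)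
  · intro g hg; exact mem_closure_of_mem_F23 g (Finset.mem_coe.mp hg)

lemma card_closure23 : Nat.card (Subgroup.closure {sigmaL23, sigmaR23}) = 120 := by
  have h1 : Nat.card (Subgroup.closure {sigmaL23, sigmaR23}) =
      Nat.card (F23 : Set (Equiv.Perm (Fin 2 × Fin 3))) :=
    Nat.card_congr (Equiv.setCongr closure_set_eq)
  rw [h1, Nat.card_coe_set_eq, Set.ncard_coe_finset, F23,
    List.toFinset_card_of_nodup nodup_els23, length_els23]

lemma v23_inj : Function.Injective v23 := by
  intro i j h
  have hi := hB23 i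
  rw [h, hB23] at hi
  exact hi.symm

/-- conjugation by `g` permutes the pentad -/
def pconj (g : Equiv.Perm (Fin 2 × Fin 3)) : Prop :=
  ∀ i : Fin 5, ∃ j : Fin 5, g * v23 i * g⁻¹ = v23 j

lemma pconj_spec {g : Equiv.Perm (Fin 2 × Fin 3)} (hg : pconj g) (i : Fin 5) :
    v23 (idx23 (g * v23 i * g⁻¹)) = g * v23 i * g⁻¹ := by
  obtain ⟨j, hj⟩ := hg i
  rw [hj, hB23]

lemma pconj_inj {g : Equiv.Perm (Fin 2 × Fin 3)} (hg : pconj g) :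
    Function.Injective (fun i => idx23 (g * v23 i * g⁻¹)) := by
  intro i j h
  apply v23_inj
  have h1 := pconj_spec hg i
  have h2 := pconj_spec hg j
  simp only at h
  rw [h, h2] at h1
  exact (mul_left_cancel (mul_right_cancel h1)).symm

lemma pconj_one : pconj 1 := fun i => ⟨i, by simp⟩

lemma pconj_mul {a b : Equiv.Perm (Fin 2 × Fin 3)} (ha : pconj a) (hb : pconj b) :
    pconj (a * b) := by
  intro i
  obtain ⟨j, hj⟩ := hb i
  obtain ⟨k, hk⟩ := ha j
  refine ⟨k, ?_⟩
  rw [← hk, ← hj]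
  group

lemma pconj_inv {a : Equiv.Perm (Fin 2 × Fin 3)} (ha : pconj a) : pconj a⁻¹ := by
  have hsurj := (Finite.injective_iff_bijective.mp (pconj_inj ha)).2
  intro i
  obtain ⟨k, hk⟩ := hsurj i
  refine ⟨k, ?_⟩
  have hs := pconj_spec ha k
  simp only at hk
  rw [hk] at hs
  rw [hs]
  group

lemma pconj_closure : ∀ g ∈ Subgroup.closure {sigmaL23, sigmaR23}, pconj g := by
  intro g hg
  refine Subgroup.closure_induction (p := fun g _ => pconj g) ?_ pconj_one
    (fun x y _ _ hx hy => pconj_mul hx hy) (fun x _ hx => pconj_inv hx) hg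
  intro x hx
  rcases hx with rfl | hx
  · exact pconjL
  · rcases hx with rfl
    exact pconjR

/-- the action on the pentad -/
def phi23 (g : Equiv.Perm (Fin 2 × Fin 3)) : Fin 5 → Fin 5 :=
  fun i => idx23 (g * v23 i * g⁻¹)

noncomputable def psi23 : (Subgroup.closure {sigmaL23, sigmaR23}) →* Equiv.Perm (Fin 5) where
  toFun g := Equiv.ofBijective (phi23 (g : Equiv.Perm (Fin 2 × Fin 3)))
    (Finite.injective_iff_bijective.mp (pconj_inj (pconj_closure _ g.2)))
  map_one' := by
    ext i
    simp only [Equiv.ofBijective_apply, Equiv.Perm.coe_one, id_eq, OneMemClass.coe_one]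
    simp [phi23, hB23]
  map_mul' a b := by
    ext i
    simp only [Equiv.ofBijective_apply, Equiv.Perm.coe_mul, Function.comp_apply,
      Subgroup.coe_mul]
    unfold phi23
    rw [pconj_spec (pconj_closure _ b.2) i]
    congr 1

lemma psi23_apply (g : Subgroup.closure {sigmaL23, sigmaR23}) (i : Fin 5) :
    psi23 g i = idx23 ((g : Equiv.Perm (Fin 2 × Fin 3)) * v23 i *
      (g : Equiv.Perm (Fin 2 × Fin 3))⁻¹ ) := rfl

lemma memL : sigmaL23 ∈ Subgroup.closure {sigmaL23, sigmaR23} :=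
  Subgroup.subset_closure (Set.mem_insert _ _)

lemma memR : sigmaR23 ∈ Subgroup.closure {sigmaL23, sigmaR23} :=
  Subgroup.subset_closure (Set.mem_insert_of_mem _ rfl)

lemma psi23_L : psi23 ⟨sigmaL23, memL⟩ = cL5 := by
  ext i
  exact congrArg Fin.val (psiL_eq i)

lemma psi23_R : psi23 ⟨sigmaR23, memR⟩ = cR5 := by
  ext i
  exact congrArg Fin.val (psiR_eq i)

lemma closure_cLcR : Subgroup.closure ({cL5, cR5} : Set (Equiv.Perm (Fin 5))) = ⊤ := by
  have hc : c05.IsCycle := List.isCycle_formPerm (by decide) (by decide)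
  have hs : c05.support = Finset.univ := by
    rw [c05, List.support_formPerm_of_nodup _ (by decide) (by decide)]
    decide
  rw [eq_top_iff, ← Equiv.Perm.closure_cycle_adjacent_swap hc hs 0, Subgroup.closure_le]
  have hL : cL5 ∈ Subgroup.closure ({cL5, cR5} : Set (Equiv.Perm (Fin 5))) :=
    Subgroup.subset_closure (Set.mem_insert _ _)
  have hR : cR5 ∈ Subgroup.closure ({cL5, cR5} : Set (Equiv.Perm (Fin 5))) :=
    Subgroup.subset_closure (Set.mem_insert_of_mem _ rfl)
  intro x hx
  rcases hx with rfl | hx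
  · rw [c05_word]
    exact mul_mem (mul_mem (mul_mem (mul_mem (mul_mem hL hL) hR) hL) hL) hL
  · rcases hx with rfl
    rw [swap_word]
    exact mul_mem (mul_mem (mul_mem (mul_mem hL hR) hR) hL) hR

lemma psi23_surj : Function.Surjective psi23 := by
  rw [← MonoidHom.range_eq_top]
  have htop : (⊤ : Subgroup (Subgroup.closure {sigmaL23, sigmaR23})) =
      Subgroup.closure {⟨sigmaL23, memL⟩, ⟨sigmaR23, memR⟩} := by
    apply Subgroup.map_injective (Subgroup.subtype_injective _)
    rw [MonoidHom.map_closure]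
    simp only [Set.image_insert_eq, Set.image_singleton, Subgroup.coe_subtype]
    rw [← MonoidHom.range_eq_map, Subgroup.range_subtype]
  rw [MonoidHom.range_eq_map, htop, MonoidHom.map_closure]
  simp only [Set.image_insert_eq, Set.image_singleton, psi23_L, psi23_R]
  exact closure_cLcR

lemma card_perm5 : Nat.card (Equiv.Perm (Fin 5)) = 120 := by
  rw [Nat.card_eq_fintype_card, Fintype.card_perm, Fintype.card_fin]
  rfl

lemma psi23_bij : Function.Bijective psi23 := by
  rw [Nat.bijective_iff_surjective_and_card]
  exact ⟨psi23_surj, by rw [card_closure23, card_perm5]⟩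

lemma card_perm23 : Nat.card (Equiv.Perm (Fin 2 × Fin 3)) = 720 := by
  rw [Nat.card_eq_fintype_card, Fintype.card_perm, Fintype.card_prod, Fintype.card_fin,
    Fintype.card_fin]
  rfl

/-- For the 2×3 rectangle, the puzzle group G = ⟨σ_L, σ_R⟩ is a subgroup of S₆ of
order 120 isomorphic to S₅, and it is a proper subgroup of S₆ (in particular
G ≠ A₆ and G ≠ S₆). -/
theorem two_by_three_puzzle_group :
    Nat.card (Subgroup.closure {sigmaL23, sigmaR23}) = 120 ∧
    Nonempty ((Subgroup.closure {sigmaL23, sigmaR23}) ≃* Equiv.Perm (Fin 5)) ∧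
    Subgroup.closure {sigmaL23, sigmaR23} ≠ ⊤ ∧
    Subgroup.closure {sigmaL23, sigmaR23} ≠ alternatingGroup (Fin 2 × Fin 3) := by
  refine ⟨card_closure23, ⟨MulEquiv.ofBijective psi23 psi23_bij⟩, ?_, ?_⟩
  · intro h
    have := card_closure23
    rw [h, Subgroup.card_top, card_perm23] at this
    omega
  · intro h
    have halt : 2 * Fintype.card (alternatingGroup (Fin 2 × Fin 3)) =
        Fintype.card (Equiv.Perm (Fin 2 × Fin 3)) := two_mul_card_alternatingGroup
    have h720 : Fintype.card (Equiv.Perm (Fin 2 × Fin 3)) = 720 := by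
      rw [← Nat.card_eq_fintype_card]; exact card_perm23
    have := card_closure23
    rw [h, Nat.card_eq_fintype_card] at this
    omega
end

section
/- For k even with k ≡ 0 mod 4, the conjugate τ = (σ_R² σ_L²)^{k/4} σ_R (σ_R² σ_L²)^{-k/4} in the k×(k+1) rectangle fixes each tile (i, k/2+1) for 1 ≤ i ≤ k, and decomposes the remaining k² tiles into k²/4 disjoint 4-cycles of the form ((i,j), (k/2+j, k/2+1+i), (i, k+2-j), (k/2+j, k/2+1-i)) for 1 ≤ i,j ≤ k/2. -/
/-- For k ≡ 0 mod 4, the conjugate τ = (σ_R² σ_L²)^{k/4} σ_R (σ_R² σ_L²)^{-k/4} in the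
k×(k+1) rectangle fixes each tile (i, k/2+1) for 1 ≤ i ≤ k, and decomposes the remaining
k² tiles into k²/4 disjoint 4-cycles of the form
((i,j), (k/2+j, k/2+1+i), (i, k+2-j), (k/2+j, k/2+1-i)) for 1 ≤ i,j ≤ k/2. -/
theorem conjugate_cycle_structure (k : ℕ) (hk : k % 4 = 0) (σL σR : Equiv.Perm (ℕ × ℕ))
    (hL : ∀ i j, 1 ≤ i → i ≤ k → 1 ≤ j → j ≤ k → σL (i, j) = (j, k + 1 - i))
    (hL' : ∀ i, 1 ≤ i → i ≤ k → σL (i, k + 1) = (i, k + 1))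
    (hR : ∀ i j, 1 ≤ i → i ≤ k → 2 ≤ j → j ≤ k + 1 → σR (i, j) = (j - 1, k + 2 - i))
    (hR' : ∀ i, 1 ≤ i → i ≤ k → σR (i, 1) = (i, 1)) :
    (∀ i, 1 ≤ i → i ≤ k →
      ((σR ^ 2 * σL ^ 2) ^ (k / 4) * σR * ((σR ^ 2 * σL ^ 2) ^ (k / 4))⁻¹)
        (i, k / 2 + 1) = (i, k / 2 + 1)) ∧
    (∀ i j, 1 ≤ i → i ≤ k / 2 → 1 ≤ j → j ≤ k / 2 →
      ((σR ^ 2 * σL ^ 2) ^ (k / 4) * σR * ((σR ^ 2 * σL ^ 2) ^ (k / 4))⁻¹)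
        (i, j) = (k / 2 + j, k / 2 + 1 + i) ∧
      ((σR ^ 2 * σL ^ 2) ^ (k / 4) * σR * ((σR ^ 2 * σL ^ 2) ^ (k / 4))⁻¹)
        (k / 2 + j, k / 2 + 1 + i) = (i, k + 2 - j) ∧
      ((σR ^ 2 * σL ^ 2) ^ (k / 4) * σR * ((σR ^ 2 * σL ^ 2) ^ (k / 4))⁻¹)
        (i, k + 2 - j) = (k / 2 + j, k / 2 + 1 - i) ∧
      ((σR ^ 2 * σL ^ 2) ^ (k / 4) * σR * ((σR ^ 2 * σL ^ 2) ^ (k / 4))⁻¹)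
        (k / 2 + j, k / 2 + 1 - i) = (i, j)) := by
  obtain ⟨m, rfl⟩ : ∃ m, k = 4 * m := ⟨k / 4, by omega⟩
  simp only [show 4 * m / 4 = m from by omega, show 4 * m / 2 = 2 * m from by omega]
  set φ : Equiv.Perm (ℕ × ℕ) := σR ^ 2 * σL ^ 2 with hφdef
  -- single step
  have hφ : ∀ i j, 1 ≤ i → i ≤ 4 * m → 1 ≤ j → j ≤ 4 * m + 1 →
      φ (i, j) = if j + 2 ≤ 4 * m + 1 then (i, j + 2) else (4 * m + 1 - i, j + 1 - 4 * m) := by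
    intro i j hi1 hi2 hj1 hj2
    have happ : φ (i, j) = σR (σR (σL (σL (i, j)))) := by
      simp [hφdef, pow_two, Equiv.Perm.mul_apply]
    by_cases h : j + 2 ≤ 4 * m + 1
    · have s1 : σL (i, j) = (j, 4 * m + 1 - i) := hL i j hi1 hi2 hj1 (by omega)
      have s2 : σL (j, 4 * m + 1 - i) = (4 * m + 1 - i, 4 * m + 1 - j) := by
        exact hL j (4 * m + 1 - i) hj1 (by omega) (by omega) (by omega)
      have s3 : σR (4 * m + 1 - i, 4 * m + 1 - j) = (4 * m - j, i + 1) := by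
        rw [hR (4 * m + 1 - i) (4 * m + 1 - j) (by omega) (by omega) (by omega) (by omega)]
        simp only [Prod.mk.injEq, true_and, and_true] <;> omega
      have s4 : σR (4 * m - j, i + 1) = (i, j + 2) := by
        rw [hR (4 * m - j) (i + 1) (by omega) (by omega) (by omega) (by omega)]
        simp only [Prod.mk.injEq, true_and, and_true] <;> omega
      rw [if_pos h, happ, s1, s2]
      rw [s3]
      exact s4
    · rw [if_neg h, happ]
      rcases (by omega : j = 4 * m ∨ j = 4 * m + 1) with rfl | rfl
      · have s1 : σL (i, 4 * m) = (4 * m, 4 * m + 1 - i) :=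
          hL i (4 * m) hi1 hi2 (by omega) le_rfl
        have s2 : σL (4 * m, 4 * m + 1 - i) = (4 * m + 1 - i, 1) := by
          rw [hL (4 * m) (4 * m + 1 - i) (by omega) (by omega) (by omega) (by omega)]
          simp only [Prod.mk.injEq, true_and, and_true] <;> omega
        have s3 : σR (4 * m + 1 - i, 1) = (4 * m + 1 - i, 1) :=
          hR' (4 * m + 1 - i) (by omega) (by omega)
        rw [s1, s2, s3, s3]
        simp only [Prod.mk.injEq, true_and, and_true] <;> omega
      · have s1 : σR (i, 4 * m + 1) = (4 * m, 4 * m + 2 - i) := by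
          rw [hR i (4 * m + 1) hi1 hi2 (by omega) le_rfl]
          simp only [Prod.mk.injEq, true_and, and_true] <;> omega
        have s2 : σR (4 * m, 4 * m + 2 - i) = (4 * m + 1 - i, 2) := by
          rw [hR (4 * m) (4 * m + 2 - i) (by omega) (by omega) (by omega) (by omega)]
          simp only [Prod.mk.injEq, true_and, and_true] <;> omega
        rw [hL' i hi1 hi2, hL' i hi1 hi2, s1, s2]
        simp only [Prod.mk.injEq, true_and, and_true] <;> omega
  -- power formula
  have hP : ∀ t, t ≤ m → ∀ i j, 1 ≤ i → i ≤ 4 * m → 1 ≤ j → j ≤ 4 * m + 1 →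
      (φ ^ t) (i, j) = if j + 2 * t ≤ 4 * m + 1 then (i, j + 2 * t)
        else (4 * m + 1 - i, j + 2 * t - (4 * m + 1)) := by
    intro t
    induction t with
    | zero =>
      intro _ i j hi1 hi2 hj1 hj2
      rw [pow_zero, if_pos (by omega)]
      simp
    | succ t ih =>
      intro ht i j hi1 hi2 hj1 hj2
      have hst : (φ ^ (t + 1)) (i, j) = φ ((φ ^ t) (i, j)) := by
        rw [pow_succ']; rfl
      rw [hst, ih (by omega) i j hi1 hi2 hj1 hj2]
      by_cases hA : j + 2 * t ≤ 4 * m + 1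
      · rw [if_pos hA, hφ i (j + 2 * t) hi1 hi2 (by omega) (by omega)]
        by_cases hB : j + 2 * t + 2 ≤ 4 * m + 1
        · rw [if_pos hB, if_pos (by omega)]
          simp only [Prod.mk.injEq, true_and, and_true] <;> omega
        · rw [if_neg hB, if_neg (by omega)]
          simp only [Prod.mk.injEq, true_and, and_true] <;> omega
      · rw [if_neg hA,
          hφ (4 * m + 1 - i) (j + 2 * t - (4 * m + 1)) (by omega) (by omega) (by omega) (by omega)]
        rw [if_pos (by omega), if_neg (by omega)]
        simp only [Prod.mk.injEq, true_and, and_true] <;> omega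
  have key : ∀ (a a' b' : ℕ × ℕ), (φ ^ m) a' = a → (φ ^ m) (σR a') = b' →
      ((φ ^ m * σR * (φ ^ m)⁻¹)) a = b' := by
    intro a a' b' h1 h2
    have hinv : ((φ ^ m)⁻¹ : Equiv.Perm (ℕ × ℕ)) a = a' := by
      rw [← h1]; simp
    simp only [Equiv.Perm.mul_apply, hinv, h2]
  constructor
  · intro i hi1 hi2
    refine key _ (i, 1) _ ?_ ?_
    · rw [hP m le_rfl i 1 hi1 hi2 le_rfl (by omega), if_pos (by omega)]
      simp only [Prod.mk.injEq, true_and, and_true] <;> omega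
    · rw [hR' i hi1 hi2, hP m le_rfl i 1 hi1 hi2 le_rfl (by omega), if_pos (by omega)]
      simp only [Prod.mk.injEq, true_and, and_true] <;> omega
  · intro i j hi1 hi2 hj1 hj2
    refine ⟨?_, ?_, ?_, ?_⟩
    · refine key _ (4 * m + 1 - i, j + 2 * m + 1) _ ?_ ?_
      · rw [hP m le_rfl _ _ (by omega) (by omega) (by omega) (by omega), if_neg (by omega)]
        simp only [Prod.mk.injEq, true_and, and_true] <;> omega
      · have hs : σR (4 * m + 1 - i, j + 2 * m + 1) = (j + 2 * m, i + 1) := by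
          rw [hR _ _ (by omega) (by omega) (by omega) (by omega)]
          simp only [Prod.mk.injEq, true_and, and_true] <;> omega
        rw [hs, hP m le_rfl _ _ (by omega) (by omega) (by omega) (by omega), if_pos (by omega)]
        simp only [Prod.mk.injEq, true_and, and_true] <;> omega
    · refine key _ (2 * m + j, i + 1) _ ?_ ?_
      · rw [hP m le_rfl _ _ (by omega) (by omega) (by omega) (by omega), if_pos (by omega)]
        simp only [Prod.mk.injEq, true_and, and_true] <;> omega
      · have hs : σR (2 * m + j, i + 1) = (i, 2 * m + 2 - j) := by
          rw [hR _ _ (by omega) (by omega) (by omega) (by omega)]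
          simp only [Prod.mk.injEq, true_and, and_true] <;> omega
        rw [hs, hP m le_rfl _ _ (by omega) (by omega) (by omega) (by omega), if_pos (by omega)]
        simp only [Prod.mk.injEq, true_and, and_true] <;> omega
    · refine key _ (i, 2 * m + 2 - j) _ ?_ ?_
      · rw [hP m le_rfl _ _ (by omega) (by omega) (by omega) (by omega), if_pos (by omega)]
        simp only [Prod.mk.injEq, true_and, and_true] <;> omega
      · have hs : σR (i, 2 * m + 2 - j) = (2 * m + 1 - j, 4 * m + 2 - i) := by
          rw [hR _ _ (by omega) (by omega) (by omega) (by omega)]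
          simp only [Prod.mk.injEq, true_and, and_true] <;> omega
        rw [hs, hP m le_rfl _ _ (by omega) (by omega) (by omega) (by omega), if_neg (by omega)]
        simp only [Prod.mk.injEq, true_and, and_true] <;> omega
    · refine key _ (2 * m + 1 - j, 4 * m + 2 - i) _ ?_ ?_
      · rw [hP m le_rfl _ _ (by omega) (by omega) (by omega) (by omega), if_neg (by omega)]
        simp only [Prod.mk.injEq, true_and, and_true] <;> omega
      · have hs : σR (2 * m + 1 - j, 4 * m + 2 - i) = (4 * m + 1 - i, 2 * m + 1 + j) := by
          rw [hR _ _ (by omega) (by omega) (by omega) (by omega)]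
          simp only [Prod.mk.injEq, true_and, and_true] <;> omega
        rw [hs, hP m le_rfl _ _ (by omega) (by omega) (by omega) (by omega), if_neg (by omega)]
        simp only [Prod.mk.injEq, true_and, and_true] <;> omega
end
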